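/- Let p, q be probability densities and w a weight function with ∫pw > 0 and ∫qw > 0, such that x ↦ w(x)·q(x)·log q(x) is μ-integrable and x ↦ w(x)·q(x)·log p(x) is quasi-integrable with ∫ w·q·log p dμ < ∞. Then ∫_X S^{CL}(p,x;w)·q(x) dμ(x) − ∫_X S^{CL}(q,x;w)·q(x) dμ(x) ≥ 0 (in the extended reals), with equality if and only if there exists a constant c > 0 with p = c·q μ-a.e. on {w > 0}; moreover the left-hand side equals (∫qw) times the Kullback–Leibler divergence ∫_X q_w·log(q_w/p_w) dμ of the renormalized densities. -/

import Mathlib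

open MeasureTheory
open scoped ENNReal

noncomputable section

/-- A probability density with respect to `μ`. -/
def IsDensity {X : Type*} [MeasurableSpace X] (μ : Measure X) (p : X → ℝ) : Prop :=
  Measurable p ∧ (∀ x, 0 ≤ p x) ∧ ∫ x, p x ∂μ = 1

/-- A weight function: measurable with values in `[0,1]`. -/
def IsWeight {X : Type*} [MeasurableSpace X] (w : X → ℝ) : Prop :=
  Measurable w ∧ ∀ x, w x ∈ Set.Icc (0 : ℝ) 1

/-- The extended-real logarithm of a real number: `log r` for `r > 0`, and `−∞`
for `r ≤ 0`. -/
def elog (r : ℝ) : EReal := if r ≤ 0 then ⊥ else ((Real.log r : ℝ) : EReal)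

/-- The positive part of an extended real, as an extended nonnegative real. -/
def epos (e : EReal) : ℝ≥0∞ := if e = ⊤ then ⊤ else ENNReal.ofReal e.toReal

/-- The quasi-integral of an extended-real-valued function: positive part minus
negative part (each a lower Lebesgue integral). -/
def eintE {X : Type*} [MeasurableSpace X] (μ : Measure X) (f : X → EReal) : EReal :=
  ((∫⁻ x, epos (f x) ∂μ : ℝ≥0∞) : EReal) - ((∫⁻ x, epos (-f x) ∂μ : ℝ≥0∞) : EReal)

/-- The renormalized density `p_w(x) = w(x)·p(x) / ∫ p·w dμ`. -/
def renorm {X : Type*} [MeasurableSpace X] (μ : Measure X) (p w : X → ℝ) : X → ℝ :=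
  fun x => w x * p x / ∫ y, p y * w y ∂μ

/-- The conditional likelihood rule `S^CL(p,x;w) = −w(x)·log p(x) + w(x)·log(∫pw)`,
with values in the extended reals (so that `−log p(x) = +∞` when `p(x) = 0`, and
`0·log 0 = 0`). -/
def SCLe {X : Type*} [MeasurableSpace X] (μ : Measure X) (p w : X → ℝ) (x : X) : EReal :=
  -((w x : ℝ) : EReal) * elog (p x) + ((w x : ℝ) : EReal) * elog (∫ y, p y * w y ∂μ)

lemma epos_coe (r : ℝ) : epos (r : EReal) = ENNReal.ofReal r := by
  simp [epos, EReal.toReal_coe]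
lemma epos_bot : epos (⊥ : EReal) = 0 := by simp [epos]
lemma epos_top : epos (⊤ : EReal) = ⊤ := by simp [epos]

lemma ereal_coe_sub_coe (a b : ℝ≥0∞) (ha : a ≠ ⊤) (hb : b ≠ ⊤) :
    (a : EReal) - (b : EReal) = ((a.toReal - b.toReal : ℝ) : EReal) := by
  have h1 : ((a.toReal : ℝ) : EReal) = (a : EReal) := by
    rw [← EReal.toReal_coe_ennreal]
    exact EReal.coe_toReal (by simpa [EReal.coe_ennreal_eq_top_iff] using ha)
      (EReal.coe_ennreal_ne_bot a)
  have h2 : ((b.toReal : ℝ) : EReal) = (b : EReal) := by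
    rw [← EReal.toReal_coe_ennreal]
    exact EReal.coe_toReal (by simpa [EReal.coe_ennreal_eq_top_iff] using hb)
      (EReal.coe_ennreal_ne_bot b)
  rw [EReal.coe_sub, h1, h2]

lemma lintegral_ofReal_lt_top {X : Type*} [MeasurableSpace X] {μ : Measure X}
    {g : X → ℝ} (hg : Integrable g μ) : ∫⁻ x, ENNReal.ofReal (g x) ∂μ < ⊤ := by
  refine lt_of_le_of_lt (lintegral_mono fun x => ?_) hg.2
  rw [← ofReal_norm]
  exact ENNReal.ofReal_le_ofReal (le_abs_self _)

lemma eintE_coe_of_integrable {X : Type*} [MeasurableSpace X] {μ : Measure X}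
    {g : X → ℝ} (hg : Integrable g μ) :
    eintE μ (fun x => ((g x : ℝ) : EReal)) = ((∫ x, g x ∂μ : ℝ) : EReal) := by
  unfold eintE
  have h2 : ∀ x : X, -((g x : ℝ) : EReal) = (((-g x : ℝ)) : EReal) := fun x => by
    rw [EReal.coe_neg]
  simp only [epos_coe, h2]
  have h3 : ∫⁻ x, ENNReal.ofReal (-g x) ∂μ < ⊤ := by
    simpa using lintegral_ofReal_lt_top hg.neg
  rw [ereal_coe_sub_coe _ _ (lintegral_ofReal_lt_top hg).ne h3.ne]
  rw [integral_eq_lintegral_pos_part_sub_lintegral_neg_part hg]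

lemma eintE_congr_ae {X : Type*} [MeasurableSpace X] {μ : Measure X}
    {f g : X → EReal} (h : f =ᵐ[μ] g) : eintE μ f = eintE μ g := by
  unfold eintE
  have e1 : ∫⁻ x, epos (f x) ∂μ = ∫⁻ x, epos (g x) ∂μ :=
    lintegral_congr_ae (h.mono fun x hx => by dsimp only; rw [hx])
  have e2 : ∫⁻ x, epos (-f x) ∂μ = ∫⁻ x, epos (-g x) ∂μ :=
    lintegral_congr_ae (h.mono fun x hx => by dsimp only; rw [hx])
  rw [e1, e2]

lemma eintE_eq_top {X : Type*} [MeasurableSpace X] {μ : Measure X}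
    {f : X → EReal} (h1 : ∫⁻ x, epos (f x) ∂μ = ⊤)
    (h2 : ∫⁻ x, epos (-f x) ∂μ ≠ ⊤) : eintE μ f = ⊤ := by
  unfold eintE
  rw [h1]
  have : ((∫⁻ x, epos (-f x) ∂μ : ℝ≥0∞) : EReal) = (((∫⁻ x, epos (-f x) ∂μ).toReal : ℝ) : EReal) := by
    rw [← EReal.toReal_coe_ennreal]
    exact (EReal.coe_toReal (by simpa [EReal.coe_ennreal_eq_top_iff] using h2)
      (EReal.coe_ennreal_ne_bot _)).symm
  rw [this, EReal.coe_ennreal_top, EReal.top_sub_coe]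


lemma elog_of_pos {r : ℝ} (h : 0 < r) : elog r = ((Real.log r : ℝ) : EReal) :=
  if_neg (not_le.2 h)
lemma elog_of_nonpos {r : ℝ} (h : r ≤ 0) : elog r = ⊥ := if_pos h

lemma pos_left_of_mul_pos {a b : ℝ} (h : 0 < a * b) (ha : 0 ≤ a) : 0 < a :=
  ha.lt_of_ne fun e => by rw [← e, zero_mul] at h; exact lt_irrefl 0 h
lemma pos_right_of_mul_pos {a b : ℝ} (h : 0 < a * b) (hb : 0 ≤ b) : 0 < b :=
  hb.lt_of_ne fun e => by rw [← e, mul_zero] at h; exact lt_irrefl 0 h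

lemma SCLe_mul_top {X : Type*} [MeasurableSpace X] (μ : Measure X) (p q w : X → ℝ)
    (hIp : 0 < ∫ y, p y * w y ∂μ) {x : X}
    (hwx : 0 < w x) (hqx : 0 < q x) (hpx : p x ≤ 0) :
    SCLe μ p w x * ((q x : ℝ) : EReal) = ⊤ := by
  unfold SCLe
  rw [elog_of_nonpos hpx, elog_of_pos hIp]
  have h1 : -((w x : ℝ) : EReal) * ⊥ = ⊤ := by
    apply EReal.mul_bot_of_neg
    rw [← EReal.coe_neg]
    exact EReal.coe_lt_coe_iff.2 (neg_neg_of_pos hwx)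
  have h2 : ((w x : ℝ) : EReal) * ((Real.log (∫ y, p y * w y ∂μ) : ℝ) : EReal)
      = ((w x * Real.log (∫ y, p y * w y ∂μ) : ℝ) : EReal) := by norm_cast
  rw [h1, h2, EReal.top_add_coe]
  exact EReal.top_mul_of_pos (EReal.coe_pos.2 hqx)

lemma SCLe_mul_coe {X : Type*} [MeasurableSpace X] (μ : Measure X) (p q w : X → ℝ)
    (hIp : 0 < ∫ y, p y * w y ∂μ) {x : X}
    (hwx : 0 ≤ w x) (hqx : 0 ≤ q x)
    (hx : ¬(0 < w x * q x ∧ p x ≤ 0)) :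
    SCLe μ p w x * ((q x : ℝ) : EReal)
      = ((w x * q x * (Real.log (∫ y, p y * w y ∂μ) - Real.log (p x)) : ℝ) : EReal) := by
  rcases eq_or_lt_of_le hwx with hw0 | hw0
  · unfold SCLe
    rw [← hw0]
    norm_num
  · by_cases hpx : p x ≤ 0
    · -- then q x = 0
      have hq0 : q x = 0 := by
        by_contra hq0
        exact hx ⟨mul_pos hw0 (hqx.lt_of_ne (Ne.symm hq0)), hpx⟩
      rw [hq0]
      rw [show SCLe μ p w x * ((0:ℝ):EReal) = 0 from by rw [EReal.coe_zero, mul_zero]]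
      norm_num
    · push_neg at hpx
      unfold SCLe
      rw [elog_of_pos hpx, elog_of_pos hIp]
      have : (-((w x:ℝ):EReal) * ((Real.log (p x):ℝ):EReal)
            + ((w x:ℝ):EReal) * ((Real.log (∫ y, p y * w y ∂μ):ℝ):EReal)) * ((q x:ℝ):EReal)
          = (((-(w x) * Real.log (p x) + w x * Real.log (∫ y, p y * w y ∂μ)) * q x : ℝ) : EReal) := by
        norm_cast
      rw [this, EReal.coe_eq_coe_iff]
      ring

lemma renorm_term_top {X : Type*} [MeasurableSpace X] (μ : Measure X) (p q w : X → ℝ)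
    (hIp : 0 < ∫ y, p y * w y ∂μ) (hIq : 0 < ∫ y, q y * w y ∂μ) {x : X}
    (hwx : 0 < w x) (hqx : 0 < q x) (hpx : p x ≤ 0) :
    ((renorm μ q w x : ℝ) : EReal) * (elog (renorm μ q w x) - elog (renorm μ p w x)) = ⊤ := by
  unfold renorm
  have h1 : w x * p x / (∫ y, p y * w y ∂μ) ≤ 0 := by
    apply div_nonpos_iff.2
    right
    constructor
    · exact mul_nonpos_iff.2 (Or.inl ⟨hwx.le, hpx⟩)
    · exact hIp.le
  have h2 : 0 < w x * q x / ∫ y, q y * w y ∂μ := div_pos (mul_pos hwx hqx) hIq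
  rw [elog_of_nonpos h1, elog_of_pos h2, EReal.coe_sub_bot]
  exact EReal.mul_top_of_pos (EReal.coe_pos.2 h2)

lemma renorm_term_coe {X : Type*} [MeasurableSpace X] (μ : Measure X) (p q w : X → ℝ)
    (hIp : 0 < ∫ y, p y * w y ∂μ) (hIq : 0 < ∫ y, q y * w y ∂μ) {x : X}
    (hwx : 0 ≤ w x) (hqx : 0 ≤ q x)
    (hx : ¬(0 < w x * q x ∧ p x ≤ 0)) :
    ((renorm μ q w x : ℝ) : EReal) * (elog (renorm μ q w x) - elog (renorm μ p w x))
      = (((w x * q x * (Real.log (∫ y, p y * w y ∂μ) - Real.log (p x))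
          - w x * q x * (Real.log (∫ y, q y * w y ∂μ) - Real.log (q x)))
          / ∫ y, q y * w y ∂μ : ℝ) : EReal) := by
  unfold renorm
  by_cases hwq : 0 < w x * q x
  · have hpx : 0 < p x := not_le.1 fun h => hx ⟨hwq, h⟩
    have hw' : 0 < w x := pos_left_of_mul_pos hwq hwx
    have hq' : 0 < q x := pos_right_of_mul_pos hwq hqx
    have h2 : 0 < w x * q x / ∫ y, q y * w y ∂μ := div_pos hwq hIq
    have h3 : 0 < w x * p x / ∫ y, p y * w y ∂μ := div_pos (mul_pos hw' hpx) hIp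
    rw [elog_of_pos h2, elog_of_pos h3]
    have : ((w x * q x / ∫ y, q y * w y ∂μ : ℝ) : EReal)
          * (((Real.log (w x * q x / ∫ y, q y * w y ∂μ) : ℝ) : EReal)
            - ((Real.log (w x * p x / ∫ y, p y * w y ∂μ) : ℝ) : EReal))
        = (((w x * q x / ∫ y, q y * w y ∂μ)
            * (Real.log (w x * q x / ∫ y, q y * w y ∂μ)
              - Real.log (w x * p x / ∫ y, p y * w y ∂μ)) : ℝ) : EReal) := by norm_cast
    rw [this, EReal.coe_eq_coe_iff]
    rw [Real.log_div (mul_pos hw' hq').ne' hIq.ne', Real.log_mul hw'.ne' hq'.ne',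
      Real.log_div (mul_pos hw' hpx).ne' hIp.ne', Real.log_mul hw'.ne' hpx.ne']
    ring
  · have hwq0 : w x * q x = 0 := le_antisymm (not_lt.1 hwq) (mul_nonneg hwx hqx)
    rw [hwq0]
    norm_num

lemma gibbs_pointwise {w q p Ip Iq : ℝ} (hw : 0 ≤ w) (hq : 0 ≤ q) (hp : 0 ≤ p)
    (hIp : 0 < Ip) (hIq : 0 < Iq) (hx : ¬(0 < w * q ∧ p ≤ 0)) :
    w * q * (Real.log p - Real.log q) + w * q * (Real.log Iq - Real.log Ip)
      ≤ w * p * (Iq / Ip) - w * q := by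
  by_cases hwq : 0 < w * q
  · have hp' : 0 < p := not_le.1 fun h => hx ⟨hwq, h⟩
    have hw' : 0 < w := pos_left_of_mul_pos hwq hw
    have hq' : 0 < q := pos_right_of_mul_pos hwq hq
    have ht : 0 < p * Iq / (q * Ip) := by positivity
    have hlog := Real.log_le_sub_one_of_pos ht
    have hlogeq : Real.log (p * Iq / (q * Ip))
        = Real.log p - Real.log q + (Real.log Iq - Real.log Ip) := by
      rw [Real.log_div (by positivity) (by positivity), Real.log_mul hp'.ne' hIq.ne',
        Real.log_mul hq'.ne' hIp.ne']
      ring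
    have h2 : w * q * Real.log (p * Iq / (q * Ip)) ≤ w * q * (p * Iq / (q * Ip) - 1) :=
      mul_le_mul_of_nonneg_left hlog hwq.le
    have h3 : w * q * (p * Iq / (q * Ip) - 1) = w * p * (Iq / Ip) - w * q := by
      field_simp
    calc w * q * (Real.log p - Real.log q) + w * q * (Real.log Iq - Real.log Ip)
        = w * q * Real.log (p * Iq / (q * Ip)) := by rw [hlogeq]; ring
      _ ≤ w * q * (p * Iq / (q * Ip) - 1) := h2
      _ = w * p * (Iq / Ip) - w * q := h3
  · have hwq0 : w * q = 0 := le_antisymm (not_lt.1 hwq) (mul_nonneg hw hq)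
    rw [hwq0]
    have h1 : 0 ≤ w * p * (Iq / Ip) := by
      positivity
    linarith

lemma gibbs_eq_pointwise {w q p Ip Iq : ℝ} (hw : 0 ≤ w) (hq : 0 ≤ q) (hp : 0 ≤ p)
    (hIp : 0 < Ip) (hIq : 0 < Iq) (hx : ¬(0 < w * q ∧ p ≤ 0))
    (heq : w * p * (Iq / Ip) - w * q
      - (w * q * (Real.log p - Real.log q) + w * q * (Real.log Iq - Real.log Ip)) = 0)
    (hwpos : 0 < w) : p = Ip / Iq * q := by
  by_cases hq' : 0 < q
  · have hwq : 0 < w * q := mul_pos hwpos hq'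
    have hp' : 0 < p := not_le.1 fun h => hx ⟨hwq, h⟩
    have ht : 0 < p * Iq / (q * Ip) := by positivity
    have hlogeq : Real.log (p * Iq / (q * Ip))
        = Real.log p - Real.log q + (Real.log Iq - Real.log Ip) := by
      rw [Real.log_div (by positivity) (by positivity), Real.log_mul hp'.ne' hIq.ne',
        Real.log_mul hq'.ne' hIp.ne']
      ring
    have e1 : w * p * (Iq / Ip) - w * q = w * q * (p * Iq / (q * Ip) - 1) := by
      field_simp
    have h1 : Real.log (p * Iq / (q * Ip)) = p * Iq / (q * Ip) - 1 := by
      have : w * q * (p * Iq / (q * Ip) - 1) = w * q * Real.log (p * Iq / (q * Ip)) := by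
        rw [hlogeq]; nlinarith [heq, e1]
      have h2 := mul_left_cancel₀ hwq.ne' this
      linarith
    have ht1 : p * Iq / (q * Ip) = 1 := by
      by_contra hne
      exact absurd h1 (ne_of_lt (Real.log_lt_sub_one_of_pos ht hne))
    have : p * Iq = q * Ip := by
      field_simp at ht1
      linarith
    field_simp
    nlinarith [this]
  · have hq0 : q = 0 := le_antisymm (not_lt.1 hq') hq
    have : w * p * (Iq / Ip) = 0 := by rw [hq0] at heq; linarith [heq]
    have hp0 : p = 0 := by
      have h2 : Iq / Ip ≠ 0 := by positivity
      rcases mul_eq_zero.1 this with h | h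
      · rcases mul_eq_zero.1 h with h' | h'
        · exact absurd h' hwpos.ne'
        · exact h'
      · exact absurd h h2
    rw [hp0, hq0, mul_zero]

lemma gibbs_eq_of_prop {w q p Ip Iq c : ℝ} (hw : 0 ≤ w) (hq : 0 ≤ q)
    (hIp : 0 < Ip) (hIq : 0 < Iq)
    (hc : 0 < c) (hcIp : Ip = c * Iq) (hpc : 0 < w → p = c * q) :
    w * p * (Iq / Ip) - w * q
      - (w * q * (Real.log p - Real.log q) + w * q * (Real.log Iq - Real.log Ip)) = 0 := by
  rcases eq_or_lt_of_le hw with hw0 | hw0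
  · rw [← hw0]; ring
  · rw [hpc hw0, hcIp]
    rcases eq_or_lt_of_le hq with hq0 | hq0
    · rw [← hq0]; ring
    · rw [Real.log_mul hc.ne' hq0.ne', Real.log_mul hc.ne' hIq.ne']
      field_simp
      ring

lemma ofReal_norm_le_aux (t : ℝ) : ENNReal.ofReal ‖t‖ ≤ ENNReal.ofReal t + ENNReal.ofReal (-t) := by
  rcases le_total 0 t with h | h
  · rw [Real.norm_eq_abs, abs_of_nonneg h]; exact le_add_right le_rfl
  · rw [Real.norm_eq_abs, abs_of_nonpos h]; exact le_add_left le_rfl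

/-- The conditional likelihood rule is proportionally locally proper,
and the expected score difference equals `(∫qw)` times the Kullback–Leibler divergence
of the renormalized densities. -/
theorem SCL_proportionally_locally_proper
    {X : Type*} [MeasurableSpace X] (μ : Measure X) [SigmaFinite μ]
    (p q w : X → ℝ) (hp : IsDensity μ p) (hq : IsDensity μ q) (hw : IsWeight w)
    (hpw : 0 < ∫ y, p y * w y ∂μ) (hqw : 0 < ∫ y, q y * w y ∂μ)
    (hqq : Integrable (fun x => w x * q x * Real.log (q x)) μ)
    (hqp : Integrable (fun x => max (w x * q x * Real.log (p x)) 0) μ) :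
    eintE μ (fun x => SCLe μ q w x * ((q x : ℝ) : EReal))
        ≤ eintE μ (fun x => SCLe μ p w x * ((q x : ℝ) : EReal)) ∧
    (eintE μ (fun x => SCLe μ p w x * ((q x : ℝ) : EReal))
        = eintE μ (fun x => SCLe μ q w x * ((q x : ℝ) : EReal))
      ↔ ∃ c : ℝ, 0 < c ∧ ∀ᵐ x ∂μ, 0 < w x → p x = c * q x) ∧
    eintE μ (fun x => SCLe μ p w x * ((q x : ℝ) : EReal))
        - eintE μ (fun x => SCLe μ q w x * ((q x : ℝ) : EReal))
      = ((∫ x, q x * w x ∂μ : ℝ) : EReal)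
          * eintE μ (fun x =>
              ((renorm μ q w x : ℝ) : EReal)
                * (elog (renorm μ q w x) - elog (renorm μ p w x))) := by
  obtain ⟨hpm, hp0, hp1⟩ := hp
  obtain ⟨hqm, hq0, hq1⟩ := hq
  obtain ⟨hwm, hw01⟩ := hw
  have hqint : Integrable q μ := by
    by_contra h
    rw [integral_undef h] at hq1
    norm_num at hq1
  have hpint : Integrable p μ := by
    by_contra h
    rw [integral_undef h] at hp1
    norm_num at hp1
  have hwq : Integrable (fun x => w x * q x) μ := by
    refine hqint.mono' (hwm.mul hqm).aestronglyMeasurable (ae_of_all _ fun x => ?_)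
    rw [Real.norm_eq_abs, abs_of_nonneg (mul_nonneg (hw01 x).1 (hq0 x))]
    exact mul_le_of_le_one_left (hq0 x) (hw01 x).2
  have hwp : Integrable (fun x => w x * p x) μ := by
    refine hpint.mono' (hwm.mul hpm).aestronglyMeasurable (ae_of_all _ fun x => ?_)
    rw [Real.norm_eq_abs, abs_of_nonneg (mul_nonneg (hw01 x).1 (hp0 x))]
    exact mul_le_of_le_one_left (hp0 x) (hw01 x).2
  set Ip := ∫ y, p y * w y ∂μ with hIpdef
  set Iq := ∫ y, q y * w y ∂μ with hIqdef
  set gp : X → ℝ := fun x => w x * q x * (Real.log Ip - Real.log (p x)) with hgpdef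
  set gq : X → ℝ := fun x => w x * q x * (Real.log Iq - Real.log (q x)) with hgqdef
  have hgpm : Measurable gp :=
    (hwm.mul hqm).mul (measurable_const.sub (Real.measurable_log.comp hpm))
  have hgqm : Measurable gq :=
    (hwm.mul hqm).mul (measurable_const.sub (Real.measurable_log.comp hqm))
  have hwqlogIp : Integrable (fun x => w x * q x * Real.log Ip) μ := hwq.mul_const _
  have hgqint : Integrable gq μ := by
    refine ((hwq.mul_const (Real.log Iq)).sub hqq).congr (ae_of_all _ fun x => ?_)
    simp only [Pi.sub_apply, hgqdef]
    ring
  set A : Set X := {x | 0 < w x * q x ∧ p x ≤ 0} with hAdef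
  have hAm : MeasurableSet A :=
    (measurableSet_lt measurable_const (hwm.mul hqm)).inter (measurableSet_le hpm measurable_const)
  have hsetA : {x | ¬ x ∉ A} = A := Set.ext fun x => not_not
  have hA_ae : μ A = 0 → ∀ᵐ x ∂μ, x ∉ A := fun h => by
    rw [ae_iff, hsetA]
    exact h
  have hA_ae' : (∀ᵐ x ∂μ, x ∉ A) → μ A = 0 := fun h => by
    rw [ae_iff] at h
    rwa [hsetA] at h
  have hfq_eq : ∀ x, SCLe μ q w x * ((q x : ℝ) : EReal) = ((gq x : ℝ) : EReal) := fun x => by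
    have hx : ¬(0 < w x * q x ∧ q x ≤ 0) := by
      rintro ⟨h1, h2⟩
      have := pos_right_of_mul_pos h1 (hq0 x)
      linarith
    rw [SCLe_mul_coe μ q q w hqw (hw01 x).1 (hq0 x) hx]
  have hEq : eintE μ (fun x => SCLe μ q w x * ((q x : ℝ) : EReal))
      = ((∫ x, gq x ∂μ : ℝ) : EReal) := by
    rw [show (fun x => SCLe μ q w x * ((q x : ℝ) : EReal)) = fun x => ((gq x : ℝ) : EReal)
      from funext hfq_eq]
    exact eintE_coe_of_integrable hgqint
  have hfp_off : ∀ x, x ∉ A → SCLe μ p w x * ((q x : ℝ) : EReal) = ((gp x : ℝ) : EReal) :=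
    fun x hx => by
      rw [SCLe_mul_coe μ p q w hpw (hw01 x).1 (hq0 x) hx]
  have hfp_on : ∀ x ∈ A, SCLe μ p w x * ((q x : ℝ) : EReal) = ⊤ := fun x hx => by
    have hx' : 0 < w x * q x ∧ p x ≤ 0 := hx
    exact SCLe_mul_top μ p q w hpw (pos_left_of_mul_pos hx'.1 (hw01 x).1)
      (pos_right_of_mul_pos hx'.1 (hq0 x)) hx'.2
  have hk_off : ∀ x, x ∉ A →
      ((renorm μ q w x : ℝ) : EReal) * (elog (renorm μ q w x) - elog (renorm μ p w x))
        = (((gp x - gq x) / Iq : ℝ) : EReal) := fun x hx => by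
    rw [renorm_term_coe μ p q w hpw hqw (hw01 x).1 (hq0 x) hx]
  have hk_on : ∀ x ∈ A,
      ((renorm μ q w x : ℝ) : EReal) * (elog (renorm μ q w x) - elog (renorm μ p w x)) = ⊤ :=
    fun x hx => by
      have hx' : 0 < w x * q x ∧ p x ≤ 0 := hx
      exact renorm_term_top μ p q w hpw hqw (pos_left_of_mul_pos hx'.1 (hw01 x).1)
        (pos_right_of_mul_pos hx'.1 (hq0 x)) hx'.2
  have hwqlogpm : Measurable (fun x => w x * q x * Real.log (p x)) :=
    (hwm.mul hqm).mul (Real.measurable_log.comp hpm)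
  have hconst_fin : ∫⁻ x, ENNReal.ofReal (-(w x * q x * Real.log Ip)) ∂μ < ⊤ := by
    simpa using lintegral_ofReal_lt_top hwqlogIp.neg
  have hposp_fin : ∫⁻ x, ENNReal.ofReal (w x * q x * Real.log (p x)) ∂μ < ⊤ :=
    lt_of_le_of_lt (lintegral_mono fun x => ENNReal.ofReal_le_ofReal (le_max_left _ _))
      (lintegral_ofReal_lt_top hqp)
  have hgp_neg : ∀ x, -gp x = w x * q x * Real.log (p x) + -(w x * q x * Real.log Ip) :=
    fun x => by simp only [hgpdef]; ring
  have hNegP : ∫⁻ x, epos (-(SCLe μ p w x * ((q x : ℝ) : EReal))) ∂μ ≠ ⊤ := by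
    have hbound : ∀ x, epos (-(SCLe μ p w x * ((q x : ℝ) : EReal)))
        ≤ ENNReal.ofReal (w x * q x * Real.log (p x))
          + ENNReal.ofReal (-(w x * q x * Real.log Ip)) := by
      intro x
      by_cases hx : x ∈ A
      · rw [hfp_on x hx]
        simp [epos]
      · rw [hfp_off x hx, ← EReal.coe_neg, epos_coe, hgp_neg x]
        exact ENNReal.ofReal_add_le
    refine ne_top_of_le_ne_top ?_ (lintegral_mono hbound)
    rw [lintegral_add_left hwqlogpm.ennreal_ofReal]
    exact (ENNReal.add_lt_top.2 ⟨hposp_fin, hconst_fin⟩).ne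
  have hNegK : ∫⁻ x, epos (-(((renorm μ q w x : ℝ) : EReal)
      * (elog (renorm μ q w x) - elog (renorm μ p w x)))) ∂μ ≠ ⊤ := by
    have hbound : ∀ x, epos (-(((renorm μ q w x : ℝ) : EReal)
        * (elog (renorm μ q w x) - elog (renorm μ p w x))))
        ≤ ENNReal.ofReal (1 / Iq) * (ENNReal.ofReal (gq x)
          + (ENNReal.ofReal (w x * q x * Real.log (p x))
            + ENNReal.ofReal (-(w x * q x * Real.log Ip)))) := by
      intro x
      by_cases hx : x ∈ A
      · rw [hk_on x hx]
        simp [epos]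
      · rw [hk_off x hx, ← EReal.coe_neg, epos_coe]
        have he : -((gp x - gq x) / Iq) = 1 / Iq * (gq x + -gp x) := by ring
        rw [he, ENNReal.ofReal_mul (by positivity : (0:ℝ) ≤ 1 / Iq)]
        refine mul_le_mul_right (le_trans ENNReal.ofReal_add_le (add_le_add_right ?_ _)) _
        rw [hgp_neg x]
        exact ENNReal.ofReal_add_le
    refine ne_top_of_le_ne_top ?_ (lintegral_mono hbound)
    rw [lintegral_const_mul' _ _ ENNReal.ofReal_ne_top]
    refine ENNReal.mul_ne_top ENNReal.ofReal_ne_top ?_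
    rw [lintegral_add_left hgqm.ennreal_ofReal, lintegral_add_left hwqlogpm.ennreal_ofReal]
    exact (ENNReal.add_lt_top.2 ⟨lintegral_ofReal_lt_top hgqint,
      ENNReal.add_lt_top.2 ⟨hposp_fin, hconst_fin⟩⟩).ne
  by_cases hCase : μ A = 0 ∧ Integrable (fun x => w x * q x * Real.log (p x)) μ
  · obtain ⟨hA0, hNint⟩ := hCase
    have haeA : ∀ᵐ x ∂μ, x ∉ A := hA_ae hA0
    have hgpint : Integrable gp μ := by
      refine (hwqlogIp.sub hNint).congr (ae_of_all _ fun x => ?_)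
      simp only [Pi.sub_apply, hgpdef]
      ring
    have hEp : eintE μ (fun x => SCLe μ p w x * ((q x : ℝ) : EReal))
        = ((∫ x, gp x ∂μ : ℝ) : EReal) := by
      rw [eintE_congr_ae (haeA.mono fun x hx => hfp_off x hx)]
      exact eintE_coe_of_integrable hgpint
    set φ : X → ℝ := fun x => w x * q x * (Real.log (p x) - Real.log (q x))
      + w x * q x * (Real.log Iq - Real.log Ip) with hφdef
    set ψ : X → ℝ := fun x => w x * p x * (Iq / Ip) - w x * q x with hψdef
    have hφint : Integrable φ μ := by
      refine ((hNint.sub hqq).add (hwq.mul_const (Real.log Iq - Real.log Ip))).congr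
        (ae_of_all _ fun x => ?_)
      simp only [Pi.add_apply, Pi.sub_apply, hφdef]
      ring
    have hψint : Integrable ψ μ := (hwp.mul_const _).sub hwq
    have hφψ : ∀ᵐ x ∂μ, φ x ≤ ψ x := haeA.mono fun x hx => by
      simp only [hφdef, hψdef]
      exact gibbs_pointwise (hw01 x).1 (hq0 x) (hp0 x) hpw hqw hx
    have hIψ : ∫ x, ψ x ∂μ = 0 := by
      have e1 : ∫ x, w x * p x ∂μ = Ip := by
        rw [hIpdef]
        exact integral_congr_ae (ae_of_all _ fun x => mul_comm _ _)
      have e2 : ∫ x, w x * q x ∂μ = Iq := by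
        rw [hIqdef]
        exact integral_congr_ae (ae_of_all _ fun x => mul_comm _ _)
      have e3 : ∫ x, ψ x ∂μ = (∫ x, w x * p x ∂μ) * (Iq / Ip) - ∫ x, w x * q x ∂μ := by
        simp only [hψdef]
        rw [integral_sub (hwp.mul_const _) hwq, integral_mul_const]
      rw [e3, e1, e2]
      field_simp
      ring
    have hIφ : ∫ x, φ x ∂μ = ∫ x, gq x ∂μ - ∫ x, gp x ∂μ := by
      rw [← integral_sub hgqint hgpint]
      refine integral_congr_ae (ae_of_all _ fun x => ?_)
      simp only [hφdef, hgpdef, hgqdef]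
      ring
    have hmono := integral_mono_ae hφint hψint hφψ
    rw [hIφ, hIψ] at hmono
    refine ⟨?_, ?_, ?_⟩
    · rw [hEp, hEq]
      exact EReal.coe_le_coe_iff.2 (by linarith)
    · rw [hEp, hEq, EReal.coe_eq_coe_iff]
      constructor
      · intro he
        refine ⟨Ip / Iq, by positivity, ?_⟩
        have h0 : ∫ x, (ψ x - φ x) ∂μ = 0 := by
          rw [integral_sub hψint hφint, hIψ, hIφ, he]
          ring
        have hae0 := (integral_eq_zero_iff_of_nonneg_ae
          (hφψ.mono fun x h => by simpa using sub_nonneg.2 h) (hψint.sub hφint)).1 h0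
        filter_upwards [hae0, haeA] with x hx0 hxA hwx
        simp only [hφdef, hψdef, Pi.zero_apply] at hx0
        exact gibbs_eq_pointwise (hw01 x).1 (hq0 x) (hp0 x) hpw hqw hxA hx0 hwx
      · rintro ⟨c, hc, hpc⟩
        have hIpc : Ip = c * Iq := by
          rw [hIpdef, hIqdef, ← integral_const_mul]
          refine integral_congr_ae ?_
          filter_upwards [hpc] with x hx
          rcases eq_or_lt_of_le (hw01 x).1 with h | h
          · rw [← h]; ring
          · rw [hx h]; ring
        have hae0 : (fun x => ψ x - φ x) =ᵐ[μ] 0 := by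
          filter_upwards [hpc] with x hx
          simp only [hψdef, hφdef, Pi.zero_apply]
          exact gibbs_eq_of_prop (hw01 x).1 (hq0 x) hpw hqw hc hIpc hx
        have h0 : ∫ x, (ψ x - φ x) ∂μ = 0 := by
          rw [integral_congr_ae hae0]
          simp
        rw [integral_sub hψint hφint, hIψ, hIφ] at h0
        linarith
    · have hkae : (fun x => ((renorm μ q w x : ℝ) : EReal)
          * (elog (renorm μ q w x) - elog (renorm μ p w x)))
          =ᵐ[μ] fun x => (((gp x - gq x) / Iq : ℝ) : EReal) :=
        haeA.mono fun x hx => hk_off x hx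
      have hkint : Integrable (fun x => (gp x - gq x) / Iq) μ := (hgpint.sub hgqint).div_const _
      rw [hEp, hEq, eintE_congr_ae hkae, eintE_coe_of_integrable hkint]
      rw [integral_div, integral_sub hgpint hgqint]
      rw [← EReal.coe_sub, ← EReal.coe_mul, EReal.coe_eq_coe_iff]
      field_simp
  · have hNtop : μ A = 0 → ∫⁻ x, ENNReal.ofReal (-(w x * q x * Real.log (p x))) ∂μ = ⊤ := by
      intro hA0
      by_contra hne
      apply hCase
      refine ⟨hA0, hwqlogpm.aestronglyMeasurable, ?_⟩
      rw [hasFiniteIntegral_iff_norm]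
      refine lt_of_le_of_lt (lintegral_mono fun x => ofReal_norm_le_aux _) ?_
      rw [lintegral_add_left hwqlogpm.ennreal_ofReal]
      exact ENNReal.add_lt_top.2 ⟨hposp_fin, lt_top_iff_ne_top.2 hne⟩
    have hGptop : μ A = 0 → ∫⁻ x, ENNReal.ofReal (gp x) ∂μ = ⊤ := by
      intro hA0
      by_contra hne
      have hb : ∀ x, ENNReal.ofReal (-(w x * q x * Real.log (p x)))
          ≤ ENNReal.ofReal (gp x) + ENNReal.ofReal (-(w x * q x * Real.log Ip)) := fun x => by
        have he : -(w x * q x * Real.log (p x)) = gp x + -(w x * q x * Real.log Ip) := by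
          simp only [hgpdef]; ring
        rw [he]
        exact ENNReal.ofReal_add_le
      have hmono : ∫⁻ x, ENNReal.ofReal (-(w x * q x * Real.log (p x))) ∂μ
          ≤ ∫⁻ x, (ENNReal.ofReal (gp x) + ENNReal.ofReal (-(w x * q x * Real.log Ip))) ∂μ :=
        lintegral_mono hb
      rw [hNtop hA0, lintegral_add_left hgpm.ennreal_ofReal] at hmono
      exact absurd (top_le_iff.1 hmono)
        (ENNReal.add_lt_top.2 ⟨lt_top_iff_ne_top.2 hne, hconst_fin⟩).ne
    have hTopP : ∫⁻ x, epos (SCLe μ p w x * ((q x : ℝ) : EReal)) ∂μ = ⊤ := by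
      by_cases hA0 : μ A = 0
      · have heq : ∫⁻ x, epos (SCLe μ p w x * ((q x : ℝ) : EReal)) ∂μ
            = ∫⁻ x, ENNReal.ofReal (gp x) ∂μ :=
          lintegral_congr_ae ((hA_ae hA0).mono fun x hx => by
            show epos (SCLe μ p w x * ((q x : ℝ) : EReal)) = ENNReal.ofReal (gp x)
            rw [hfp_off x hx, epos_coe])
        rw [heq]
        exact hGptop hA0
      · rw [← top_le_iff]
        calc (⊤ : ℝ≥0∞) = ⊤ * μ A := (ENNReal.top_mul hA0).symm
          _ = ∫⁻ _ in A, ⊤ ∂μ := (setLIntegral_const A ⊤).symm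
          _ = ∫⁻ x in A, epos (SCLe μ p w x * ((q x : ℝ) : EReal)) ∂μ :=
              setLIntegral_congr_fun hAm (fun x hx => by
                rw [hfp_on x hx, epos_top])
          _ ≤ _ := setLIntegral_le_lintegral _ _
    have hEpTop : eintE μ (fun x => SCLe μ p w x * ((q x : ℝ) : EReal)) = ⊤ :=
      eintE_eq_top hTopP hNegP
    refine ⟨?_, ?_, ?_⟩
    · rw [hEq, hEpTop]
      exact le_top
    · rw [hEpTop, hEq]
      constructor
      · intro h
        exact absurd h.symm (EReal.coe_ne_top _)
      · rintro ⟨c, hc, hpc⟩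
        exfalso
        apply hCase
        constructor
        · apply hA_ae'
          filter_upwards [hpc] with x hx
          rintro ⟨h1, h2⟩
          have hw' := pos_left_of_mul_pos h1 (hw01 x).1
          have hq' := pos_right_of_mul_pos h1 (hq0 x)
          have := hx hw'
          nlinarith
        · refine ((hwq.mul_const (Real.log c)).add hqq).congr ?_
          filter_upwards [hpc] with x hx
          simp only [Pi.add_apply]
          rcases eq_or_lt_of_le (hw01 x).1 with h | h
          · rw [← h]; ring
          · rw [hx h]
            rcases eq_or_lt_of_le (hq0 x) with h' | h'
            · rw [← h']; ring
            · rw [Real.log_mul hc.ne' h'.ne']; ring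
    · have hTopK : ∫⁻ x, epos (((renorm μ q w x : ℝ) : EReal)
          * (elog (renorm μ q w x) - elog (renorm μ p w x))) ∂μ = ⊤ := by
        by_cases hA0 : μ A = 0
        · have heq : ∫⁻ x, epos (((renorm μ q w x : ℝ) : EReal)
              * (elog (renorm μ q w x) - elog (renorm μ p w x))) ∂μ
              = ∫⁻ x, ENNReal.ofReal ((gp x - gq x) / Iq) ∂μ :=
            lintegral_congr_ae ((hA_ae hA0).mono fun x hx => by
              show epos (((renorm μ q w x : ℝ) : EReal)
                * (elog (renorm μ q w x) - elog (renorm μ p w x)))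
                  = ENNReal.ofReal ((gp x - gq x) / Iq)
              rw [hk_off x hx, epos_coe])
          rw [heq]
          by_contra hne
          have hb : ∀ x, ENNReal.ofReal (gp x)
              ≤ ENNReal.ofReal Iq * ENNReal.ofReal ((gp x - gq x) / Iq)
                + ENNReal.ofReal (gq x) := fun x => by
            have he : gp x = Iq * ((gp x - gq x) / Iq) + gq x := by field_simp; ring
            calc ENNReal.ofReal (gp x)
                = ENNReal.ofReal (Iq * ((gp x - gq x) / Iq) + gq x) := by rw [← he]
              _ ≤ ENNReal.ofReal (Iq * ((gp x - gq x) / Iq)) + ENNReal.ofReal (gq x) :=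
                  ENNReal.ofReal_add_le
              _ = ENNReal.ofReal Iq * ENNReal.ofReal ((gp x - gq x) / Iq)
                  + ENNReal.ofReal (gq x) := by rw [ENNReal.ofReal_mul hqw.le]
          have hmono : ∫⁻ x, ENNReal.ofReal (gp x) ∂μ
              ≤ ∫⁻ x, (ENNReal.ofReal Iq * ENNReal.ofReal ((gp x - gq x) / Iq)
                + ENNReal.ofReal (gq x)) ∂μ := lintegral_mono hb
          rw [hGptop hA0] at hmono
          have hfin : ∫⁻ x, (ENNReal.ofReal Iq * ENNReal.ofReal ((gp x - gq x) / Iq)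
              + ENNReal.ofReal (gq x)) ∂μ < ⊤ := by
            rw [lintegral_add_left
              (f := fun x => ENNReal.ofReal Iq * ENNReal.ofReal ((gp x - gq x) / Iq)) (measurable_const.mul ((hgpm.sub hgqm).div_const Iq).ennreal_ofReal)]
            refine ENNReal.add_lt_top.2 ⟨?_, lintegral_ofReal_lt_top hgqint⟩
            rw [lintegral_const_mul' _ _ ENNReal.ofReal_ne_top]
            exact ENNReal.mul_lt_top ENNReal.ofReal_lt_top (lt_top_iff_ne_top.2 hne)
          exact absurd (top_le_iff.1 hmono) hfin.ne
        · rw [← top_le_iff]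
          calc (⊤ : ℝ≥0∞) = ⊤ * μ A := (ENNReal.top_mul hA0).symm
            _ = ∫⁻ _ in A, ⊤ ∂μ := (setLIntegral_const A ⊤).symm
            _ = ∫⁻ x in A, epos (((renorm μ q w x : ℝ) : EReal)
                * (elog (renorm μ q w x) - elog (renorm μ p w x))) ∂μ :=
                setLIntegral_congr_fun hAm (fun x hx => by
                  rw [hk_on x hx, epos_top])
            _ ≤ _ := setLIntegral_le_lintegral _ _
      have hEkTop : eintE μ (fun x => ((renorm μ q w x : ℝ) : EReal)
          * (elog (renorm μ q w x) - elog (renorm μ p w x))) = ⊤ :=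
        eintE_eq_top hTopK hNegK
      rw [hEpTop, hEq, hEkTop, EReal.top_sub_coe]
      exact (EReal.mul_top_of_pos (EReal.coe_pos.2 hqw)).symm


end
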